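/- (Finite-dimensional Bogolyubov inequality) Let $V$ be a finite-dimensional Hilbert space, $H = H^*$ a self-adjoint operator on $V$, $\beta > 0$, and for an operator $B$ define $\langle B\rangle := \mathrm{Tr}(B e^{-\beta H})/\mathrm{Tr}(e^{-\beta H})$. Then for all linear operators $A, C$ on $V$: $\frac{\beta}{2}\,\langle A^*A + AA^*\rangle \cdot \langle [[C,H],C^*]\rangle \ge |\langle [C,A]\rangle|^2$. -/

import Mathlib

open Matrix

variable {n : ℕ}

/-- Thermal (Gibbs) average of `B` w.r.t. Hamiltonian `H` at inverse temperature `β`. -/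
noncomputable def gibbsAvg (H : Matrix (Fin n) (Fin n) ℂ) (β : ℝ)
    (B : Matrix (Fin n) (Fin n) ℂ) : ℂ :=
  (B * NormedSpace.exp ((-(β : ℂ)) • H)).trace
    / (NormedSpace.exp ((-(β : ℂ)) • H)).trace

section BogolyubovAux


lemma sinh_le_mul_cosh {x : ℝ} (hx : 0 ≤ x) : Real.sinh x ≤ x * Real.cosh x := by
  have key : ∀ y : ℝ, HasDerivAt (fun t => t * Real.cosh t - Real.sinh t) (y * Real.sinh y) y := by
    intro y
    have h1 := (hasDerivAt_id y).mul (Real.hasDerivAt_cosh y)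
    have h2 := Real.hasDerivAt_sinh y
    refine (h1.sub h2).congr_deriv ?_
    simp
  have mono : MonotoneOn (fun t => t * Real.cosh t - Real.sinh t) (Set.Ici (0:ℝ)) := by
    apply monotoneOn_of_deriv_nonneg (convex_Ici 0)
    · exact (Continuous.continuousOn (by continuity))
    · intro y _; exact (key y).differentiableAt.differentiableWithinAt
    · intro y hy
      rw [(key y).deriv]
      rw [interior_Ici] at hy
      have hy' : (0:ℝ) < y := hy
      have := Real.sinh_nonneg_iff.mpr hy'.le
      positivity
  have h0 := mono (Set.self_mem_Ici) hx hx
  simp at h0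
  linarith

lemma exp_sub_exp_le {x y : ℝ} (h : y < x) :
    Real.exp x - Real.exp y ≤ (x - y) * ((Real.exp x + Real.exp y) / 2) := by
  set m := (x + y) / 2 with hm
  set d := (x - y) / 2 with hd
  have hd0 : 0 < d := by simp [hd]; linarith
  have hx : x = m + d := by rw [hm, hd]; ring
  have hy : y = m - d := by rw [hm, hd]; ring
  have hs := sinh_le_mul_cosh hd0.le
  rw [Real.sinh_eq, Real.cosh_eq] at hs
  have h1 : Real.exp x = Real.exp m * Real.exp d := by rw [hx, Real.exp_add]
  have h2 : Real.exp y = Real.exp m * Real.exp (-d) := by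
    rw [hy, show m - d = m + (-d) by ring, Real.exp_add]
  have hem := Real.exp_pos m
  rw [h1, h2]
  have : x - y = 2 * d := by rw [hd]; ring
  rw [this]
  nlinarith [Real.exp_pos d, Real.exp_pos (-d)]

noncomputable def lm (x y : ℝ) : ℝ :=
  if x = y then Real.exp x else (Real.exp x - Real.exp y) / (x - y)

lemma lm_eq (x y : ℝ) : Real.exp x - Real.exp y = (x - y) * lm x y := by
  unfold lm
  split
  · subst ‹x = y›; ring
  · have : x - y ≠ 0 := sub_ne_zero.mpr ‹x ≠ y›
    field_simp

lemma lm_comm (x y : ℝ) : lm x y = lm y x := by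
  unfold lm
  rcases eq_or_ne x y with h | h
  · simp [h]
  · rw [if_neg h, if_neg (Ne.symm h), ← neg_div_neg_eq]; ring_nf

lemma lm_nonneg (x y : ℝ) : 0 ≤ lm x y := by
  rcases lt_trichotomy x y with h | h | h
  · rw [lm_comm]
    unfold lm
    rw [if_neg h.ne']
    apply div_nonneg <;> [skip; linarith]
    have := Real.exp_le_exp.mpr h.le; linarith
  · unfold lm; rw [if_pos h]; exact (Real.exp_pos x).le
  · unfold lm
    rw [if_neg h.ne']
    apply div_nonneg <;> [skip; linarith]
    have := Real.exp_le_exp.mpr h.le; linarith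

lemma lm_le (x y : ℝ) : lm x y ≤ (Real.exp x + Real.exp y) / 2 := by
  rcases lt_trichotomy x y with h | h | h
  · rw [lm_comm]
    unfold lm
    rw [if_neg h.ne']
    rw [div_le_iff₀ (by linarith)]
    have := exp_sub_exp_le h
    nlinarith
  · unfold lm; rw [if_pos h, h]; linarith [Real.exp_pos y]
  · unfold lm
    rw [if_neg h.ne']
    rw [div_le_iff₀ (by linarith)]
    have := exp_sub_exp_le h
    nlinarith

lemma key {ι : Type*} [Fintype ι] (c a : ι → ℂ) (x y : ι → ℝ) :
    ‖∑ p, c p * a p * ((Real.exp (x p) - Real.exp (y p) : ℝ) : ℂ)‖ ^ 2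
      ≤ (∑ p, Complex.normSq (a p) * ((Real.exp (x p) + Real.exp (y p)) / 2))
        * (∑ p, Complex.normSq (c p) * ((x p - y p) * (Real.exp (x p) - Real.exp (y p)))) := by
  classical
  set f : ι → ℝ := fun p => ‖c p‖ * |x p - y p| * Real.sqrt (lm (x p) (y p)) with hf
  set g : ι → ℝ := fun p => ‖a p‖ * Real.sqrt (lm (x p) (y p)) with hg
  have hKnn : ∀ p : ι, 0 ≤ lm (x p) (y p) := fun p => lm_nonneg _ _
  have habs : ‖∑ p, c p * a p * ((Real.exp (x p) - Real.exp (y p) : ℝ) : ℂ)‖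
      ≤ ∑ p, f p * g p := by
    refine le_trans (norm_sum_le _ _) (Finset.sum_le_sum fun p _ => ?_)
    rw [norm_mul, norm_mul, Complex.norm_real, Real.norm_eq_abs, lm_eq (x p) (y p)]
    have h1 : |(x p - y p) * lm (x p) (y p)| = |x p - y p| * lm (x p) (y p) := by
      rw [abs_mul, abs_of_nonneg (hKnn p)]
    rw [h1]
    have hs := Real.mul_self_sqrt (hKnn p)
    have h2 : f p * g p
        = ‖c p‖ * ‖a p‖ * (|x p - y p| * lm (x p) (y p)) := by
      simp only [hf, hg]
      linear_combination (‖c p‖ * ‖a p‖ * |x p - y p|) * hs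
    rw [h2]
  have hf2 : ∀ p : ι, f p ^ 2
      = Complex.normSq (c p) * ((x p - y p) * (Real.exp (x p) - Real.exp (y p))) := by
    intro p
    rw [lm_eq (x p) (y p)]
    simp only [hf]
    rw [mul_pow, mul_pow, Real.sq_sqrt (hKnn p), sq_abs, ← Complex.sq_norm]
    ring
  have hg2 : ∀ p : ι, g p ^ 2
      ≤ Complex.normSq (a p) * ((Real.exp (x p) + Real.exp (y p)) / 2) := by
    intro p
    simp only [hg]
    rw [mul_pow, Real.sq_sqrt (hKnn p), Complex.sq_norm]
    exact mul_le_mul_of_nonneg_left (lm_le _ _) (Complex.normSq_nonneg _)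
  calc ‖∑ p, c p * a p * ((Real.exp (x p) - Real.exp (y p) : ℝ) : ℂ)‖ ^ 2
      ≤ (∑ p, f p * g p) ^ 2 := by
        exact pow_le_pow_left₀ (norm_nonneg _) habs 2
    _ ≤ (∑ p, f p ^ 2) * (∑ p, g p ^ 2) := Finset.sum_mul_sq_le_sq_mul_sq _ _ _
    _ ≤ (∑ p, f p ^ 2) * (∑ p, Complex.normSq (a p) * ((Real.exp (x p) + Real.exp (y p)) / 2)) := by
        refine mul_le_mul_of_nonneg_left (Finset.sum_le_sum fun p _ => hg2 p)
          (Finset.sum_nonneg fun p _ => sq_nonneg _)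
    _ = _ := by
        rw [mul_comm]
        congr 1
        exact Finset.sum_congr rfl fun p _ => hf2 p


lemma trace_mul_diag (B : Matrix (Fin n) (Fin n) ℂ) (g : Fin n → ℂ) :
    (B * Matrix.diagonal g).trace = ∑ i, B i i * g i := by
  simp [Matrix.trace, Matrix.diag, Matrix.mul_diagonal]

lemma to_pair {M : Type*} [AddCommMonoid M] (g : Fin n → Fin n → M) :
    ∑ i, ∑ j, g i j = ∑ p : Fin n × Fin n, g p.1 p.2 :=
  (Fintype.sum_prod_type (f := fun p : Fin n × Fin n => g p.1 p.2)).symm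

lemma star_mul_self_c (z : ℂ) : star z * z = ((Complex.normSq z : ℝ) : ℂ) := by
  rw [Complex.star_def, mul_comm, Complex.mul_conj]

lemma mul_star_self_c (z : ℂ) : z * star z = ((Complex.normSq z : ℝ) : ℂ) := by
  rw [Complex.star_def, Complex.mul_conj]

lemma core (E : Fin n → ℝ) (β : ℝ) (hβ : 0 < β) (A C : Matrix (Fin n) (Fin n) ℂ) :
    ‖((C * A - A * C)
        * Matrix.diagonal (fun i => (Real.exp (-(β * E i)) : ℂ))).trace‖ ^ 2
      ≤ β / 2
        * (((Aᴴ * A + A * Aᴴ)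
            * Matrix.diagonal (fun i => (Real.exp (-(β * E i)) : ℂ))).trace).re
        * ((((C * Matrix.diagonal (fun i => (E i : ℂ))
              - Matrix.diagonal (fun i => (E i : ℂ)) * C) * Cᴴ
            - Cᴴ * (C * Matrix.diagonal (fun i => (E i : ℂ))
              - Matrix.diagonal (fun i => (E i : ℂ)) * C))
            * Matrix.diagonal (fun i => (Real.exp (-(β * E i)) : ℂ))).trace).re := by
  classical
  set w : Fin n → ℝ := fun i => Real.exp (-(β * E i)) with hw
  have hkey := key (fun p : Fin n × Fin n => C p.1 p.2) (fun p => A p.2 p.1)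
      (fun p => -(β * E p.1)) (fun p => -(β * E p.2))
  -- T1 : the commutator trace as a pair-sum
  have hT1 : ((C * A - A * C) * Matrix.diagonal (fun i => (w i : ℂ))).trace
      = ∑ p : Fin n × Fin n, C p.1 p.2 * A p.2 p.1 * ((w p.1 - w p.2 : ℝ) : ℂ) := by
    rw [trace_mul_diag]
    have e1 : ∀ i, (C * A - A * C) i i * ((w i : ℝ) : ℂ)
        = ∑ j, (C i j * A j i * ((w i : ℝ) : ℂ) - A i j * C j i * ((w i : ℝ) : ℂ)) := by
      intro i
      simp only [Matrix.sub_apply, Matrix.mul_apply, sub_mul, Finset.sum_mul,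
        Finset.sum_sub_distrib]
    simp only [e1]
    simp only [Complex.ofReal_sub, mul_sub, Finset.sum_sub_distrib]
    congr 1
    · exact to_pair _
    · refine (to_pair _).trans ?_
      exact Fintype.sum_equiv (Equiv.prodComm _ _) _ _ (fun p => by
        simp only [Equiv.prodComm_apply, Prod.swap, Prod.fst, Prod.snd]; try ring)
  -- T2 : the A-term trace
  have hT2 : ((Aᴴ * A + A * Aᴴ) * Matrix.diagonal (fun i => (w i : ℂ))).trace
      = ((∑ p : Fin n × Fin n,
          Complex.normSq (A p.2 p.1) * (w p.1 + w p.2) : ℝ) : ℂ) := by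
    rw [trace_mul_diag, Complex.ofReal_sum]
    have e1 : ∀ i, (Aᴴ * A + A * Aᴴ) i i * ((w i : ℝ) : ℂ)
        = ∑ j, (((Complex.normSq (A j i) : ℝ) : ℂ) * ((w i : ℝ) : ℂ)
            + ((Complex.normSq (A i j) : ℝ) : ℂ) * ((w i : ℝ) : ℂ)) := by
      intro i
      simp only [Matrix.add_apply, Matrix.mul_apply, Matrix.conjTranspose_apply, add_mul,
        Finset.sum_mul, Finset.sum_add_distrib, star_mul_self_c, mul_star_self_c]
    simp only [e1]
    simp only [Complex.ofReal_mul, Complex.ofReal_add, mul_add, Finset.sum_add_distrib]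
    congr 1
    · exact to_pair _
    · refine (to_pair _).trans ?_
      exact Fintype.sum_equiv (Equiv.prodComm _ _) _ _ (fun p => by
        simp only [Equiv.prodComm_apply, Prod.swap, Prod.fst, Prod.snd])
  -- T3 : the C-term trace
  have hDD : C * Matrix.diagonal (fun i => (E i : ℂ))
        - Matrix.diagonal (fun i => (E i : ℂ)) * C
      = Matrix.of (fun i j => C i j * (((E j : ℝ) : ℂ) - ((E i : ℝ) : ℂ))) := by
    ext i j
    simp only [Matrix.sub_apply, Matrix.mul_diagonal, Matrix.diagonal_mul, Matrix.of_apply]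
    ring
  have hT3 : (((C * Matrix.diagonal (fun i => (E i : ℂ))
              - Matrix.diagonal (fun i => (E i : ℂ)) * C) * Cᴴ
            - Cᴴ * (C * Matrix.diagonal (fun i => (E i : ℂ))
              - Matrix.diagonal (fun i => (E i : ℂ)) * C))
            * Matrix.diagonal (fun i => (w i : ℂ))).trace
      = ((∑ p : Fin n × Fin n,
          Complex.normSq (C p.1 p.2) * ((E p.2 - E p.1) * (w p.1 - w p.2)) : ℝ) : ℂ) := by
    rw [hDD, trace_mul_diag, Complex.ofReal_sum]
    have e1 : ∀ i, ((Matrix.of (fun i j => C i j * (((E j : ℝ) : ℂ) - ((E i : ℝ) : ℂ))) * Cᴴ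
            - Cᴴ * Matrix.of (fun i j => C i j * (((E j : ℝ) : ℂ) - ((E i : ℝ) : ℂ)))) i i)
            * ((w i : ℝ) : ℂ)
        = ∑ j, (((Complex.normSq (C i j) : ℝ) : ℂ)
              * (((E j : ℝ) : ℂ) - ((E i : ℝ) : ℂ)) * ((w i : ℝ) : ℂ)
            - ((Complex.normSq (C j i) : ℝ) : ℂ)
              * (((E i : ℝ) : ℂ) - ((E j : ℝ) : ℂ)) * ((w i : ℝ) : ℂ)) := by
      intro i
      simp only [Matrix.sub_apply, Matrix.mul_apply, Matrix.conjTranspose_apply, Matrix.of_apply,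
        sub_mul, Finset.sum_mul, Finset.sum_sub_distrib]
      congr 1
      · refine Finset.sum_congr rfl fun j _ => ?_
        rw [← mul_star_self_c (C i j)]; ring
      · refine Finset.sum_congr rfl fun j _ => ?_
        rw [← star_mul_self_c (C j i)]; ring
    simp only [e1]
    have e2 : ∀ p : Fin n × Fin n,
        ((Complex.normSq (C p.1 p.2) * ((E p.2 - E p.1) * (w p.1 - w p.2)) : ℝ) : ℂ)
        = ((Complex.normSq (C p.1 p.2) : ℝ) : ℂ)
            * (((E p.2 : ℝ) : ℂ) - ((E p.1 : ℝ) : ℂ)) * ((w p.1 : ℝ) : ℂ)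
          - ((Complex.normSq (C p.1 p.2) : ℝ) : ℂ)
            * (((E p.2 : ℝ) : ℂ) - ((E p.1 : ℝ) : ℂ)) * ((w p.2 : ℝ) : ℂ) := by
      intro p; push_cast; ring
    simp only [e2, Finset.sum_sub_distrib]
    congr 1
    · exact to_pair _
    · refine (to_pair _).trans ?_
      exact Fintype.sum_equiv (Equiv.prodComm _ _) _ _ (fun p => by
        simp only [Equiv.prodComm_apply, Prod.swap, Prod.fst, Prod.snd]; try ring)
  -- assemble
  rw [hT1, hT2, hT3, Complex.ofReal_re, Complex.ofReal_re]
  have hxw : ∀ p : Fin n × Fin n, Real.exp (-(β * E p.1)) = w p.1 := fun p => rfl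
  have hyw : ∀ p : Fin n × Fin n, Real.exp (-(β * E p.2)) = w p.2 := fun p => rfl
  simp only [hxw, hyw] at hkey
  refine le_trans hkey (le_of_eq ?_)
  have hA2 : (∑ p : Fin n × Fin n, Complex.normSq (A p.2 p.1) * ((w p.1 + w p.2) / 2))
      = (∑ p : Fin n × Fin n, Complex.normSq (A p.2 p.1) * (w p.1 + w p.2)) / 2 := by
    rw [Finset.sum_div]; exact Finset.sum_congr rfl fun p _ => by ring
  have hC2 : (∑ p : Fin n × Fin n, Complex.normSq (C p.1 p.2)
        * ((-(β * E p.1) - -(β * E p.2)) * (w p.1 - w p.2)))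
      = β * ∑ p : Fin n × Fin n, Complex.normSq (C p.1 p.2)
        * ((E p.2 - E p.1) * (w p.1 - w p.2)) := by
    rw [Finset.mul_sum]; exact Finset.sum_congr rfl fun p _ => by ring
  rw [hA2, hC2]
  field_simp

end BogolyubovAux

section BogolyubovAux
variable {n : ℕ}

/-- The finite-dimensional Bogolyubov inequality:
`(β/2)⟨A*A + AA*⟩ ⟨[[C,H],C*]⟩ ≥ |⟨[C,A]⟩|²`. -/
theorem bogolyubov_inequality (hn : 0 < n)
    (H : Matrix (Fin n) (Fin n) ℂ) (hH : H.IsHermitian)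
    (β : ℝ) (hβ : 0 < β) (A C : Matrix (Fin n) (Fin n) ℂ) :
    ‖gibbsAvg H β (C * A - A * C)‖ ^ 2
      ≤ β / 2 * (gibbsAvg H β (Aᴴ * A + A * Aᴴ)).re
          * (gibbsAvg H β ((C * H - H * C) * Cᴴ - Cᴴ * (C * H - H * C))).re := by
  classical
  set U : Matrix (Fin n) (Fin n) ℂ := (hH.eigenvectorUnitary : Matrix (Fin n) (Fin n) ℂ) with hUdef
  set E : Fin n → ℝ := hH.eigenvalues with hEdef
  set DE : Matrix (Fin n) (Fin n) ℂ := Matrix.diagonal (fun i => (E i : ℂ)) with hDEdef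
  set D : Matrix (Fin n) (Fin n) ℂ :=
    Matrix.diagonal (fun i => (Real.exp (-(β * E i)) : ℂ)) with hDdef
  have hU1 : star U * U = 1 := Matrix.mem_unitaryGroup_iff'.mp hH.eigenvectorUnitary.2
  have hU2 : U * star U = 1 := Matrix.mem_unitaryGroup_iff.mp hH.eigenvectorUnitary.2
  have hspec : H = U * DE * star U := by
    have := hH.spectral_theorem
    refine this.trans ?_
    rw [Unitary.conjStarAlgAut_apply]
    rfl
  have hUinv : U⁻¹ = star U := Matrix.inv_eq_right_inv hU2
  -- exponential
  have hexp : NormedSpace.exp ((-(β : ℂ)) • H) = U * D * star U := by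
    have h1 : (-(β : ℂ)) • H = U * ((-(β : ℂ)) • DE) * U⁻¹ := by
      rw [hspec, hUinv, Matrix.mul_smul, Matrix.smul_mul]
    rw [h1, Matrix.exp_conj U ((-(β : ℂ)) • DE) (⟨⟨U, star U, hU2, hU1⟩, rfl⟩ : IsUnit U),
      hUinv]
    congr 1
    congr 1
    have h2 : (-(β : ℂ)) • DE = Matrix.diagonal (fun i => (-(β : ℂ)) * (E i : ℂ)) := by
      rw [hDEdef, ← Matrix.diagonal_smul]
      congr 1
    rw [h2, Matrix.exp_diagonal, hDdef]
    refine congrArg Matrix.diagonal (funext fun i => ?_)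
    rw [Pi.coe_exp, ← Complex.exp_eq_exp_ℂ, Complex.ofReal_exp]
    push_cast
    ring_nf
  -- traces
  set Z : ℝ := ∑ i, Real.exp (-(β * E i)) with hZdef
  have hZpos : 0 < Z := Finset.sum_pos (fun i _ => Real.exp_pos _) ⟨⟨0, hn⟩, Finset.mem_univ _⟩
  have htrZ : (NormedSpace.exp ((-(β : ℂ)) • H)).trace = (Z : ℂ) := by
    rw [hexp, Matrix.trace_mul_cycle, hU1, Matrix.one_mul, hZdef]
    push_cast
    simp [Matrix.trace, Matrix.diag, hDdef]
  -- conjugation map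
  set f : Matrix (Fin n) (Fin n) ℂ → Matrix (Fin n) (Fin n) ℂ := fun B => star U * B * U
    with hfdef
  have htrB : ∀ B : Matrix (Fin n) (Fin n) ℂ,
      (B * NormedSpace.exp ((-(β : ℂ)) • H)).trace = (f B * D).trace := by
    intro B
    simp only [hfdef]
    rw [hexp, ← Matrix.mul_assoc, ← Matrix.mul_assoc, Matrix.trace_mul_cycle,
      ← Matrix.mul_assoc]
  have hgibbs : ∀ B : Matrix (Fin n) (Fin n) ℂ,
      gibbsAvg H β B = (f B * D).trace / (Z : ℂ) := by
    intro B
    rw [gibbsAvg, htrZ, htrB]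
  -- conjugation properties
  have hmul : ∀ X Y, f (X * Y) = f X * f Y := by
    intro X Y
    simp only [hfdef]
    calc star U * (X * Y) * U = star U * X * (U * star U) * Y * U := by
          rw [hU2]; noncomm_ring
      _ = star U * X * U * (star U * Y * U) := by noncomm_ring
  have hsub : ∀ X Y, f (X - Y) = f X - f Y := by
    intro X Y; simp only [hfdef, Matrix.mul_sub, Matrix.sub_mul]
  have hadd : ∀ X Y, f (X + Y) = f X + f Y := by
    intro X Y; simp only [hfdef, Matrix.mul_add, Matrix.add_mul]
  have hct : ∀ X, f (Xᴴ) = (f X)ᴴ := by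
    intro X
    simp only [hfdef, ← Matrix.star_eq_conjTranspose]
    rw [StarMul.star_mul, StarMul.star_mul, star_star, Matrix.mul_assoc]
  have hfH : f H = DE := by
    simp only [hfdef]
    rw [hspec, ← Matrix.mul_assoc, ← Matrix.mul_assoc, hU1, Matrix.one_mul, Matrix.mul_assoc,
      hU1, Matrix.mul_one]
  -- rewrite the three averages
  rw [hgibbs, hgibbs, hgibbs]
  rw [hsub (C * A) (A * C), hmul C A, hmul A C]
  rw [hadd (Aᴴ * A) (A * Aᴴ), hmul Aᴴ A, hmul A Aᴴ, hct A]
  rw [hsub ((C * H - H * C) * Cᴴ) (Cᴴ * (C * H - H * C)), hmul (C * H - H * C) Cᴴ,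
    hmul Cᴴ (C * H - H * C), hsub (C * H) (H * C), hmul C H, hmul H C, hct C, hfH]
  -- final: divide core by Z^2
  have hcore := core E β hβ (f A) (f C)
  rw [← hDdef, ← hDEdef] at hcore
  rw [norm_div, Complex.norm_real, Real.norm_eq_abs, abs_of_pos hZpos, div_pow, Complex.div_ofReal_re,
    Complex.div_ofReal_re]
  rw [show β / 2 * ((((f A)ᴴ * f A + f A * (f A)ᴴ) * D).trace.re / Z)
        * ((((f C * DE - DE * f C) * (f C)ᴴ - (f C)ᴴ * (f C * DE - DE * f C)) * D).trace.re / Z)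
      = (β / 2 * (((f A)ᴴ * f A + f A * (f A)ᴴ) * D).trace.re
          * (((f C * DE - DE * f C) * (f C)ᴴ - (f C)ᴴ * (f C * DE - DE * f C)) * D).trace.re)
        / Z ^ 2 by ring]
  have hz2 : (0:ℝ) < Z ^ 2 := pow_pos hZpos 2
  exact (div_le_div_iff_of_pos_right hz2).mpr hcore

end BogolyubovAux
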